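/- arXiv:2402.07952 — 2 statements merged into one kernel-verified Lean document; each statement's English description precedes it below -/
import Mathlib

section
/- Let a : ℕ → ℂ be an arbitrary sequence, let t ∈ ℂ with t ≠ 0 and t ≠ 1, and let n ≥ 1 be an integer. Then ∑_{π ∈ P(n)} t^{k(π)−1} ((t−1)/t)^{Q(π)−1} ∑_{j=1}^{s(π)} a(l(π) − s(π) + j) = ∑_{d ∣ n} t^d ∑_{i=1}^{d} a(i)/t^i. -/
open Finset PowerSeries

/-- `k(π)`: number of parts of the partition `π`, counted with multiplicity. -/
def kParts {n : ℕ} (π : n.Partition) : ℕ := Multiset.card π.parts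

/-- `Q(π)`: number of distinct parts of the partition `π`. -/
def qParts {n : ℕ} (π : n.Partition) : ℕ := π.parts.toFinset.card

/-- `l(π)`: largest part of the partition `π` (`0` for the empty partition). -/
def lPart {n : ℕ} (π : n.Partition) : ℕ := π.parts.sup

/-- `s(π)`: smallest part of the partition `π` (`0` for the empty partition). -/
def sPart {n : ℕ} (π : n.Partition) : ℕ := π.parts.toFinset.min.untopD 0

namespace T4

lemma sup_mem {M : Multiset ℕ} (h : M ≠ 0) : M.sup ∈ M := by
  induction M using Multiset.induction with
  | empty => simp at h
  | cons a s ih =>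
    rcases eq_or_ne s 0 with rfl | hs
    · simp
    · rw [Multiset.sup_cons]
      rcases le_total a s.sup with h1 | h1
      · rw [sup_eq_right.2 h1]; exact Multiset.mem_cons_of_mem (ih hs)
      · rw [sup_eq_left.2 h1]; exact Multiset.mem_cons_self a s

variable {n : ℕ} (π : n.Partition)

lemma parts_ne (hn : n ≠ 0) : π.parts ≠ 0 := fun h => hn (by simpa [h] using π.parts_sum.symm)

lemma toFinset_ne (hn : n ≠ 0) : π.parts.toFinset.Nonempty := by
  rw [Multiset.toFinset_nonempty]; exact parts_ne π hn

lemma lPart_mem (hn : n ≠ 0) : lPart π ∈ π.parts := sup_mem (parts_ne π hn)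

lemma le_lPart {x : ℕ} (hx : x ∈ π.parts) : x ≤ lPart π := Multiset.le_sup hx

lemma sPart_eq_min' (hn : n ≠ 0) : sPart π = π.parts.toFinset.min' (toFinset_ne π hn) := by
  rw [sPart, ← Finset.coe_min' (toFinset_ne π hn)]; rfl

lemma sPart_mem (hn : n ≠ 0) : sPart π ∈ π.parts := by
  rw [sPart_eq_min' π hn, ← Multiset.mem_toFinset]
  exact Finset.min'_mem _ _

lemma sPart_le {x : ℕ} (hn : n ≠ 0) (hx : x ∈ π.parts) : sPart π ≤ x := by
  rw [sPart_eq_min' π hn]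
  exact Finset.min'_le _ _ (Multiset.mem_toFinset.2 hx)

lemma sPart_pos (hn : n ≠ 0) : 0 < sPart π := π.parts_pos (sPart_mem π hn)

lemma lPart_pos (hn : n ≠ 0) : 0 < lPart π := π.parts_pos (lPart_mem π hn)

lemma sPart_le_lPart (hn : n ≠ 0) : sPart π ≤ lPart π :=
  sPart_le π hn (lPart_mem π hn)

lemma lPart_le (hn : n ≠ 0) : lPart π ≤ n := by
  have := Multiset.single_le_sum (s := π.parts) (fun x _ => Nat.zero_le x) _ (lPart_mem π hn)
  simpa [π.parts_sum] using this

lemma qParts_pos (hn : n ≠ 0) : 0 < qParts π :=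
  Finset.card_pos.2 (toFinset_ne π hn)

lemma qParts_le_kParts : qParts π ≤ kParts π := Multiset.toFinset_card_le _


variable {M : Multiset ℕ} {a : ℕ}

lemma toFinset_erase_of_one (h : M.count a = 1) :
    (M.erase a).toFinset = M.toFinset.erase a := by
  ext x
  simp only [Multiset.mem_toFinset, Finset.mem_erase]
  rcases eq_or_ne x a with rfl | hx
  · have hc : Multiset.count x (M.erase x) = 0 := by rw [Multiset.count_erase_self]; omega
    constructor
    · intro hmem; have := Multiset.count_pos.2 hmem; omega
    · rintro ⟨h1, -⟩; exact absurd rfl h1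
  · simp [Multiset.mem_erase_of_ne hx, hx]

lemma toFinset_erase_of_two (h : 2 ≤ M.count a) :
    (M.erase a).toFinset = M.toFinset := by
  ext x
  simp only [Multiset.mem_toFinset]
  rcases eq_or_ne x a with rfl | hx
  · constructor
    · intro hmem; exact Multiset.mem_of_mem_erase hmem
    · intro hmem
      rw [← Multiset.count_pos, Multiset.count_erase_self]
      omega
  · simp [Multiset.mem_erase_of_ne hx]

lemma mem_erase_self_iff (ha : a ∈ M) : a ∈ M.erase a ↔ 2 ≤ M.count a := by
  rw [← Multiset.count_pos, Multiset.count_erase_self]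
  rw [← Multiset.count_pos] at ha
  omega

lemma card_lt_of_two (ha : 2 ≤ M.count a) : M.toFinset.card < Multiset.card M := by
  have h1 : a ∈ M.toFinset := by rw [Multiset.mem_toFinset, ← Multiset.count_pos]; omega
  have h2 := Multiset.toFinset_sum_count_eq M
  have h3 : ∑ x ∈ M.toFinset, M.count x = M.count a + ∑ x ∈ M.toFinset.erase a, M.count x :=
    (Finset.add_sum_erase _ _ h1).symm
  have h4 : ∀ x ∈ M.toFinset.erase a, 1 ≤ M.count x := by
    intro x hx
    have := Finset.mem_of_mem_erase hx
    rw [Multiset.mem_toFinset, ← Multiset.count_pos] at this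
    omega
  have h5 : (M.toFinset.erase a).card ≤ ∑ x ∈ M.toFinset.erase a, M.count x := by
    simpa using Finset.card_nsmul_le_sum (M.toFinset.erase a) (fun x => M.count x) 1 h4
  have h6 : (M.toFinset.erase a).card = M.toFinset.card - 1 := Finset.card_erase_of_mem h1
  have h7 : 1 ≤ M.toFinset.card := Finset.card_pos.2 ⟨a, h1⟩
  omega

noncomputable def W (t : ℂ) (M : Multiset ℕ) : ℂ :=
  t ^ (Multiset.card M - M.toFinset.card) * (t - 1) ^ (M.toFinset.card - 1)

lemma W_cons_mem (t : ℂ) {M : Multiset ℕ} {c : ℕ} (h : c ∈ M) :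
    W t (c ::ₘ M) = t * W t M := by
  have h1 : (c ::ₘ M).toFinset = M.toFinset := by
    rw [Multiset.toFinset_cons, Finset.insert_eq_self.2 (Multiset.mem_toFinset.2 h)]
  have h2 : M.toFinset.card ≤ Multiset.card M := Multiset.toFinset_card_le M
  have h3 : Multiset.card (c ::ₘ M) = Multiset.card M + 1 := by simp
  rw [W, W, h1, h3]
  have h4 : Multiset.card M + 1 - M.toFinset.card = (Multiset.card M - M.toFinset.card) + 1 := by
    omega
  rw [h4, pow_succ]
  ring

lemma W_cons_not_mem (t : ℂ) {M : Multiset ℕ} {c : ℕ} (h : c ∉ M) (hM : M ≠ 0) :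
    W t (c ::ₘ M) = (t - 1) * W t M := by
  have h1 : (c ::ₘ M).toFinset = insert c M.toFinset := Multiset.toFinset_cons c M
  have hq : 1 ≤ M.toFinset.card := Finset.card_pos.2 (by rwa [Multiset.toFinset_nonempty])
  have h2 : (insert c M.toFinset).card = M.toFinset.card + 1 :=
    Finset.card_insert_of_notMem (fun hc => h (Multiset.mem_toFinset.1 hc))
  have h3 : Multiset.card (c ::ₘ M) = Multiset.card M + 1 := by simp
  rw [W, W, h1, h2, h3]
  have h4 : Multiset.card M + 1 - (M.toFinset.card + 1) = Multiset.card M - M.toFinset.card := by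
    omega
  have h5 : M.toFinset.card + 1 - 1 = (M.toFinset.card - 1) + 1 := by omega
  rw [h4, h5, pow_succ]
  ring


def junkP (N : ℕ) : N.Partition :=
  ⟨Multiset.replicate N 1, fun {i} hi => by rw [Multiset.eq_of_mem_replicate hi]; norm_num,
   by simp⟩

noncomputable def eraseOne {n : ℕ} (π : n.Partition) (c : ℕ) (N : ℕ) : N.Partition :=
  if h : c ∈ π.parts ∧ c + N = n then
    ⟨π.parts.erase c, fun {i} hi => π.parts_pos (Multiset.mem_of_mem_erase hi), by
      have h1 := Multiset.cons_erase h.1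
      have h2 := π.parts_sum
      rw [← h1, Multiset.sum_cons] at h2
      omega⟩
  else junkP N

noncomputable def addOne {N : ℕ} (σ : N.Partition) (c : ℕ) (n : ℕ) : n.Partition :=
  if h : c ≠ 0 ∧ c + N = n then
    ⟨c ::ₘ σ.parts, fun {i} hi => by
      rcases Multiset.mem_cons.1 hi with rfl | hi'
      · omega
      · exact σ.parts_pos hi', by
      rw [Multiset.sum_cons, σ.parts_sum]; omega⟩
  else junkP n

lemma eraseOne_parts {n : ℕ} (π : n.Partition) (c N : ℕ) (h1 : c ∈ π.parts) (h2 : c + N = n) :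
    (eraseOne π c N).parts = π.parts.erase c := by
  rw [eraseOne, dif_pos ⟨h1, h2⟩]

lemma addOne_parts {N : ℕ} (σ : N.Partition) (c n : ℕ) (h1 : c ≠ 0) (h2 : c + N = n) :
    (addOne σ c n).parts = c ::ₘ σ.parts := by
  rw [addOne, dif_pos ⟨h1, h2⟩]


noncomputable def w (t : ℂ) {n : ℕ} (π : n.Partition) : ℂ := W t π.parts

lemma w_eq (t : ℂ) {n : ℕ} (π : n.Partition) :
    w t π = t ^ (kParts π - qParts π) * (t - 1) ^ (qParts π - 1) := rfl

noncomputable def g (t : ℂ) (m : ℕ) {n : ℕ} (π : n.Partition) : ℂ :=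
  if lPart π - sPart π = m then -t * w t π else (1 - t) * w t π

noncomputable def Lsum (t : ℂ) (n m : ℕ) : ℂ :=
  ∑ π ∈ univ.filter (fun π : n.Partition => lPart π = m), w t π

noncomputable def Lam (t : ℂ) (n m : ℕ) : ℂ :=
  ∑ π ∈ univ.filter (fun π : n.Partition => lPart π ≤ m), w t π

noncomputable def Cg (t : ℂ) (n m : ℕ) : ℂ :=
  ∑ π ∈ univ.filter (fun π : n.Partition => lPart π - sPart π ≤ m ∧ m + 1 ≤ lPart π), g t m π

noncomputable def Ssum (t : ℂ) (n m : ℕ) : ℂ :=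
  ∑ π ∈ univ.filter (fun π : n.Partition => lPart π - sPart π < m ∧ m ≤ lPart π), w t π

lemma filter_ext {n : ℕ} (P Q : n.Partition → Prop) [DecidablePred P] [DecidablePred Q]
    (h : ∀ π : n.Partition, P π ↔ Q π) :
    univ.filter P = univ.filter Q := by
  apply Finset.filter_congr
  intro π _
  simpa using h π

lemma sum_split {n : ℕ} (f : n.Partition → ℂ) (P Q : n.Partition → Prop)
    [DecidablePred P] [DecidablePred Q] :
    ∑ π ∈ univ.filter P, f π
      = ∑ π ∈ univ.filter (fun π => P π ∧ Q π), f π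
        + ∑ π ∈ univ.filter (fun π => P π ∧ ¬ Q π), f π := by
  rw [← Finset.sum_filter_add_sum_filter_not (univ.filter P) Q, Finset.filter_filter,
    Finset.filter_filter]

lemma lemA (t : ℂ) {N m : ℕ} (hN : N ≠ 0) (hm : m ≠ 0) :
    Lsum t (N + m) m = t * Lsum t N m + (t - 1) * Lam t N (m - 1) := by
  have hNm : N + m ≠ 0 := by omega
  have key : t * Lsum t N m + (t - 1) * Lam t N (m - 1)
      = ∑ ρ ∈ univ.filter (fun ρ : N.Partition => lPart ρ ≤ m),
          (if lPart ρ = m then t else (t - 1)) * w t ρ := by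
    rw [sum_split (fun ρ => (if lPart ρ = m then t else (t - 1)) * w t ρ)
      (fun ρ => lPart ρ ≤ m) (fun ρ => lPart ρ = m)]
    have e1 : univ.filter (fun ρ : N.Partition => lPart ρ ≤ m ∧ lPart ρ = m)
        = univ.filter (fun ρ : N.Partition => lPart ρ = m) :=
      filter_ext _ _ (fun ρ => by constructor <;> intro h <;> [exact h.2; exact ⟨le_of_eq h, h⟩])
    have e2 : univ.filter (fun ρ : N.Partition => lPart ρ ≤ m ∧ ¬ lPart ρ = m)
        = univ.filter (fun ρ : N.Partition => lPart ρ ≤ m - 1) :=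
      filter_ext _ _ (fun ρ => by omega)
    rw [e1, e2, Lsum, Lam, Finset.mul_sum, Finset.mul_sum]
    congr 1
    · exact Finset.sum_congr rfl (fun ρ hρ => by
        rw [if_pos (Finset.mem_filter.1 hρ).2])
    · exact Finset.sum_congr rfl (fun ρ hρ => by
        have := (Finset.mem_filter.1 hρ).2
        rw [if_neg (by omega)])
  rw [key, Lsum]
  refine Finset.sum_bij' (fun π _ => eraseOne π m N) (fun ρ _ => addOne ρ m (N + m))
    ?_ ?_ ?_ ?_ ?_
  · -- hi : image in filter
    intro π hπ
    have hl : lPart π = m := (Finset.mem_filter.1 hπ).2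
    have hmem : m ∈ π.parts := by have h0 := lPart_mem π hNm; rwa [hl] at h0
    have hp := eraseOne_parts π m N hmem (by omega)
    simp only [Finset.mem_filter, Finset.mem_univ, true_and]
    rw [lPart, hp]
    have : ∀ x ∈ π.parts.erase m, x ≤ m := fun x hx =>
      hl ▸ le_lPart π (Multiset.mem_of_mem_erase hx)
    exact Multiset.sup_le.2 this
  · -- hj
    intro ρ hρ
    have hl : lPart ρ ≤ m := (Finset.mem_filter.1 hρ).2
    have hp := addOne_parts ρ m (N + m) hm (by omega)
    simp only [Finset.mem_filter, Finset.mem_univ, true_and]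
    rw [lPart, hp, Multiset.sup_cons]
    exact sup_eq_left.2 hl
  · -- left inverse
    intro π hπ
    have hl : lPart π = m := (Finset.mem_filter.1 hπ).2
    have hmem : m ∈ π.parts := by have h0 := lPart_mem π hNm; rwa [hl] at h0
    have hp := eraseOne_parts π m N hmem (by omega)
    apply Nat.Partition.ext
    rw [addOne_parts _ m (N + m) hm (by omega), hp, Multiset.cons_erase hmem]
  · -- right inverse
    intro ρ hρ
    have hp := addOne_parts ρ m (N + m) hm (by omega)
    apply Nat.Partition.ext
    have hmem : m ∈ (addOne ρ m (N + m)).parts := by rw [hp]; exact Multiset.mem_cons_self _ _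
    rw [eraseOne_parts _ m N hmem (by omega), hp, Multiset.erase_cons_head]
  · -- weights
    intro π hπ
    have hl : lPart π = m := (Finset.mem_filter.1 hπ).2
    have hmem : m ∈ π.parts := by have h0 := lPart_mem π hNm; rwa [hl] at h0
    have hp := eraseOne_parts π m N hmem (by omega)
    have hπparts : π.parts = m ::ₘ (eraseOne π m N).parts := by
      rw [hp, Multiset.cons_erase hmem]
    have hErNe : (eraseOne π m N).parts ≠ 0 := parts_ne _ hN
    by_cases hc : m ∈ (eraseOne π m N).parts
    · have hlem : lPart (eraseOne π m N) = m := by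
        apply le_antisymm
        · rw [lPart, hp]
          exact Multiset.sup_le.2 (fun x hx => hl ▸ le_lPart π (Multiset.mem_of_mem_erase hx))
        · exact le_lPart _ hc
      rw [if_pos hlem, w, w, hπparts, W_cons_mem t hc]
    · have hlne : lPart (eraseOne π m N) ≠ m := by
        intro hcon
        have hmm := lPart_mem (eraseOne π m N) hN
        rw [hcon] at hmm
        exact hc hmm
      rw [if_neg hlne, w, w, hπparts, W_cons_not_mem t hc hErNe]

lemma Lam_split (t : ℂ) {N m : ℕ} (hm : m ≠ 0) :
    Lam t N m = Lam t N (m - 1) + Lsum t N m := by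
  rw [Lam, sum_split (fun ρ => w t ρ) (fun ρ : N.Partition => lPart ρ ≤ m)
    (fun ρ => lPart ρ = m)]
  have e1 : univ.filter (fun ρ : N.Partition => lPart ρ ≤ m ∧ lPart ρ = m)
      = univ.filter (fun ρ : N.Partition => lPart ρ = m) :=
    filter_ext _ _ (fun ρ => by omega)
  have e2 : univ.filter (fun ρ : N.Partition => lPart ρ ≤ m ∧ ¬ lPart ρ = m)
      = univ.filter (fun ρ : N.Partition => lPart ρ ≤ m - 1) :=
    filter_ext _ _ (fun ρ => by omega)
  rw [e1, e2, Lam, Lsum, add_comm]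

noncomputable def Gg (t : ℂ) (n m : ℕ) : ℂ :=
  ∑ π ∈ univ.filter (fun π : n.Partition => lPart π - sPart π ≤ m), g t m π

lemma Gg_split (t : ℂ) {n m : ℕ} (hn : n ≠ 0) (hm : m ≠ 0) :
    Gg t n m = (1 - t) * Lam t n m + Cg t n m := by
  rw [Gg, sum_split (g t m) (fun π : n.Partition => lPart π - sPart π ≤ m)
    (fun π => m + 1 ≤ lPart π)]
  have e2 : univ.filter (fun π : n.Partition => lPart π - sPart π ≤ m ∧ ¬ m + 1 ≤ lPart π)
      = univ.filter (fun π : n.Partition => lPart π ≤ m) :=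
    filter_ext _ _ (fun π => by omega)
  rw [e2, add_comm, Cg]
  congr 1
  rw [Lam, Finset.mul_sum]
  apply Finset.sum_congr rfl
  intro π hπ
  have hl : lPart π ≤ m := (Finset.mem_filter.1 hπ).2
  have hs : 0 < sPart π := sPart_pos π hn
  have hsl : sPart π ≤ lPart π := sPart_le_lPart π hn
  rw [g, if_neg (by omega)]

noncomputable def replaceOne {n : ℕ} (π : n.Partition) (cold cnew : ℕ) (N : ℕ) : N.Partition :=
  if h : cold ∈ π.parts ∧ cnew ≠ 0 ∧ N + cold = n + cnew then
    ⟨cnew ::ₘ π.parts.erase cold, fun {i} hi => by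
      rcases Multiset.mem_cons.1 hi with rfl | hi'
      · omega
      · exact π.parts_pos (Multiset.mem_of_mem_erase hi'), by
      have h1 := Multiset.cons_erase h.1
      have h2 := π.parts_sum
      rw [← h1, Multiset.sum_cons] at h2
      rw [Multiset.sum_cons]
      omega⟩
  else junkP N

lemma replaceOne_parts {n : ℕ} (π : n.Partition) (cold cnew N : ℕ) (h1 : cold ∈ π.parts)
    (h2 : cnew ≠ 0) (h3 : N + cold = n + cnew) :
    (replaceOne π cold cnew N).parts = cnew ::ₘ π.parts.erase cold := by
  rw [replaceOne, dif_pos ⟨h1, h2, h3⟩]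

lemma alg1 (t : ℂ) {k Q : ℕ} (h2 : 2 ≤ Q) (hQk : Q ≤ k) :
    -t * (t ^ (k - Q) * (t - 1) ^ (Q - 1))
      = (1 - t) * (t ^ (k - (Q - 1)) * (t - 1) ^ (Q - 1 - 1)) := by
  obtain ⟨b, rfl⟩ : ∃ b, Q = b + 2 := ⟨Q - 2, by omega⟩
  obtain ⟨a, rfl⟩ : ∃ a, k = a + (b + 2) := ⟨k - (b + 2), by omega⟩
  have e1 : a + (b + 2) - (b + 2) = a := by omega
  have e2 : b + 2 - 1 = b + 1 := by omega
  have e3 : a + (b + 2) - (b + 2 - 1) = a + 1 := by omega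
  have e4 : b + 2 - 1 - 1 = b := by omega
  rw [e4, e3, e1, e2, pow_succ, pow_succ]
  ring

lemma alg2 (t : ℂ) {k Q : ℕ} (h1 : 1 ≤ Q) (hQk : Q + 1 ≤ k) :
    (1 - t) * (t ^ (k - Q) * (t - 1) ^ (Q - 1))
      = -t * (t ^ (k - (Q + 1)) * (t - 1) ^ (Q + 1 - 1)) := by
  obtain ⟨b, rfl⟩ : ∃ b, Q = b + 1 := ⟨Q - 1, by omega⟩
  obtain ⟨a, rfl⟩ : ∃ a, k = a + (b + 2) := ⟨k - (b + 2), by omega⟩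
  have e1 : a + (b + 2) - (b + 1) = a + 1 := by omega
  have e2 : b + 1 - 1 = b := by omega
  have e3 : a + (b + 2) - (b + 1 + 1) = a := by omega
  have e4 : b + 1 + 1 - 1 = b + 1 := by omega
  rw [e1, e2, e3, e4, pow_succ, pow_succ]
  ring

lemma sPart_eq_of {n : ℕ} (π : n.Partition) (hn : n ≠ 0) {c : ℕ} (hc : c ∈ π.parts)
    (hall : ∀ x ∈ π.parts, c ≤ x) : sPart π = c :=
  le_antisymm (sPart_le π hn hc) (hall _ (sPart_mem π hn))

lemma lPart_eq_of {n : ℕ} (π : n.Partition) {c : ℕ} (hc : c ∈ π.parts)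
    (hall : ∀ x ∈ π.parts, x ≤ c) : lPart π = c :=
  le_antisymm (Multiset.sup_le.2 hall) (le_lPart π hc)

noncomputable def phi (m N : ℕ) {n : ℕ} (π : n.Partition) : N.Partition :=
  replaceOne π (lPart π) (lPart π - m) N

noncomputable def psi (m N : ℕ) {n : ℕ} (σ : n.Partition) : N.Partition :=
  replaceOne σ (sPart σ) (sPart σ + m) N

section PhiFacts

variable {N m : ℕ} (π : (N + m).Partition)

lemma phi_parts (hN : N ≠ 0) (hl : m + 1 ≤ lPart π) :
    (phi m N π).parts = (lPart π - m) ::ₘ π.parts.erase (lPart π) :=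
  replaceOne_parts π (lPart π) (lPart π - m) N (lPart_mem π (by omega)) (by omega) (by
    have := lPart_le π (show N + m ≠ 0 by omega)
    omega)

lemma phi_bound (hN : N ≠ 0) (hl : m + 1 ≤ lPart π) (hd : lPart π - sPart π ≤ m) :
    ∀ x ∈ (phi m N π).parts, lPart π - m ≤ x ∧ x ≤ lPart π := by
  intro x hx
  rw [phi_parts π hN hl] at hx
  have hsl : sPart π ≤ lPart π := sPart_le_lPart π (by omega)
  rcases Multiset.mem_cons.1 hx with rfl | hx'
  · omega
  · have hx2 := Multiset.mem_of_mem_erase hx'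
    have h1 := sPart_le π (by omega) hx2
    have h2 := le_lPart π hx2
    omega

lemma phi_sPart (hN : N ≠ 0) (hl : m + 1 ≤ lPart π) (hd : lPart π - sPart π ≤ m) :
    sPart (phi m N π) = lPart π - m := by
  apply sPart_eq_of _ hN
  · rw [phi_parts π hN hl]; exact Multiset.mem_cons_self _ _
  · exact fun x hx => (phi_bound π hN hl hd x hx).1

lemma phi_lPart_le (hN : N ≠ 0) (hl : m + 1 ≤ lPart π) (hd : lPart π - sPart π ≤ m) :
    lPart (phi m N π) ≤ lPart π := by
  rw [lPart]
  exact Multiset.sup_le.2 (fun x hx => (phi_bound π hN hl hd x hx).2)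

lemma phi_lPart_iff (hN : N ≠ 0) (hm : m ≠ 0) (hl : m + 1 ≤ lPart π)
    (hd : lPart π - sPart π ≤ m) :
    lPart (phi m N π) = lPart π ↔ lPart π ∈ π.parts.erase (lPart π) := by
  constructor
  · intro h
    have hmm := lPart_mem (phi m N π) hN
    rw [h, phi_parts π hN hl] at hmm
    rcases Multiset.mem_cons.1 hmm with heq | hx
    · omega
    · exact hx
  · intro h
    apply le_antisymm (phi_lPart_le π hN hl hd)
    apply le_lPart
    rw [phi_parts π hN hl]
    exact Multiset.mem_cons_of_mem h

end PhiFacts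

section PsiFacts

variable {N m : ℕ} (σ : N.Partition)

lemma psi_parts (hN : N ≠ 0) (hm : m ≠ 0) :
    (psi m (N + m) σ).parts = (sPart σ + m) ::ₘ σ.parts.erase (sPart σ) :=
  replaceOne_parts σ (sPart σ) (sPart σ + m) (N + m) (sPart_mem σ hN) (by omega) (by omega)

lemma psi_bound (hN : N ≠ 0) (hm : m ≠ 0) (hd : lPart σ - sPart σ ≤ m) :
    ∀ x ∈ (psi m (N + m) σ).parts, sPart σ ≤ x ∧ x ≤ sPart σ + m := by
  intro x hx
  rw [psi_parts σ hN hm] at hx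
  have hsl : sPart σ ≤ lPart σ := sPart_le_lPart σ hN
  rcases Multiset.mem_cons.1 hx with rfl | hx'
  · omega
  · have hx2 := Multiset.mem_of_mem_erase hx'
    have h1 := sPart_le σ hN hx2
    have h2 := le_lPart σ hx2
    omega

lemma psi_lPart (hN : N ≠ 0) (hm : m ≠ 0) (hd : lPart σ - sPart σ ≤ m) :
    lPart (psi m (N + m) σ) = sPart σ + m := by
  apply lPart_eq_of
  · rw [psi_parts σ hN hm]; exact Multiset.mem_cons_self _ _
  · exact fun x hx => (psi_bound σ hN hm hd x hx).2

lemma psi_sPart_ge (hN : N ≠ 0) (hm : m ≠ 0) (hd : lPart σ - sPart σ ≤ m) :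
    sPart σ ≤ sPart (psi m (N + m) σ) :=
  (psi_bound σ hN hm hd _ (sPart_mem _ (by omega))).1

end PsiFacts

lemma lemB (t : ℂ) {N m : ℕ} (hN : N ≠ 0) (hm : m ≠ 0) :
    Cg t (N + m) m = Gg t N m := by
  have hNm : N + m ≠ 0 := by omega
  rw [Cg, Gg]
  refine Finset.sum_bij' (fun π _ => phi m N π) (fun σ _ => psi m (N + m) σ) ?_ ?_ ?_ ?_ ?_
  · -- maps into target filter
    intro π hπ
    obtain ⟨hd, hl⟩ := (Finset.mem_filter.1 hπ).2
    simp only [Finset.mem_filter, Finset.mem_univ, true_and]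
    have h1 := phi_sPart π hN hl hd
    have h2 := phi_lPart_le π hN hl hd
    omega
  · intro σ hσ
    have hd := (Finset.mem_filter.1 hσ).2
    simp only [Finset.mem_filter, Finset.mem_univ, true_and]
    have h1 := psi_lPart σ hN hm hd
    have h2 := psi_sPart_ge σ hN hm hd
    have h3 : 0 < sPart σ := sPart_pos σ hN
    have h4 : sPart (psi m (N + m) σ) ≤ lPart (psi m (N + m) σ) := sPart_le_lPart _ hNm
    show lPart (psi m (N + m) σ) - sPart (psi m (N + m) σ) ≤ m ∧ m + 1 ≤ lPart (psi m (N + m) σ)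
    omega
  · -- left inverse
    intro π hπ
    obtain ⟨hd, hl⟩ := (Finset.mem_filter.1 hπ).2
    apply Nat.Partition.ext
    rw [psi_parts _ hN hm, phi_sPart π hN hl hd, phi_parts π hN hl,
      Multiset.erase_cons_head]
    have e : lPart π - m + m = lPart π := by omega
    rw [e, Multiset.cons_erase (lPart_mem π hNm)]
  · -- right inverse
    intro σ hσ
    have hd := (Finset.mem_filter.1 hσ).2
    apply Nat.Partition.ext
    have h1 := psi_lPart σ hN hm hd
    have hsp : 0 < sPart σ := sPart_pos σ hN
    rw [phi_parts _ hN (by show m + 1 ≤ lPart (psi m (N + m) σ); omega), h1,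
      psi_parts σ hN hm, Multiset.erase_cons_head]
    have e : sPart σ + m - m = sPart σ := by omega
    rw [e, Multiset.cons_erase (sPart_mem σ hN)]
  · -- weight preservation
    intro π hπ
    obtain ⟨hd, hl⟩ := (Finset.mem_filter.1 hπ).2
    have hsl : sPart π ≤ lPart π := sPart_le_lPart π hNm
    have hpp := phi_parts π hN hl
    have hσs := phi_sPart π hN hl hd
    have hσle := phi_lPart_le π hN hl hd
    have hσge : lPart π - m ≤ lPart (phi m N π) := by
      rw [← hσs]; exact sPart_le_lPart _ hN
    have hLmem := lPart_mem π hNm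
    have hkσ : kParts (phi m N π) = kParts π := by
      rw [kParts, kParts, hpp, Multiset.card_cons, Multiset.card_erase_of_mem hLmem]
      have hpos : 0 < Multiset.card π.parts := Multiset.card_pos.2 (parts_ne π hNm)
      exact Nat.succ_pred_eq_of_pos hpos
    have hQpos : 1 ≤ qParts π := qParts_pos π hNm
    have hQk : qParts π ≤ kParts π := qParts_le_kParts π
    have hlm_ne : lPart π - m ≠ lPart π := by omega
    have memE : lPart π - m ∈ π.parts.erase (lPart π) ↔ lPart π - m ∈ π.parts :=
      Multiset.mem_erase_of_ne hlm_ne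
    -- condition on π side
    have cπ : lPart π - sPart π = m ↔ lPart π - m ∈ π.parts := by
      constructor
      · intro h
        have : sPart π = lPart π - m := by omega
        rw [← this]; exact sPart_mem π hNm
      · intro h
        have h1 := sPart_le π hNm h
        omega
    -- condition on σ side
    have cσ : lPart (phi m N π) - sPart (phi m N π) = m ↔
        lPart π ∈ π.parts.erase (lPart π) := by
      rw [hσs, ← phi_lPart_iff π hN hm hl hd]
      omega
    have hqσ : (phi m N π).parts.toFinset = insert (lPart π - m) (π.parts.erase (lPart π)).toFinset := by
      rw [hpp, Multiset.toFinset_cons]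
    have hQdef : qParts π = π.parts.toFinset.card := rfl
    by_cases h1 : lPart π ∈ π.parts.erase (lPart π)
    · have hcount : 2 ≤ π.parts.count (lPart π) := (mem_erase_self_iff hLmem).1 h1
      have hEfin : (π.parts.erase (lPart π)).toFinset = π.parts.toFinset :=
        toFinset_erase_of_two hcount
      have hklt : qParts π < kParts π := card_lt_of_two hcount
      by_cases h2 : lPart π - m ∈ π.parts
      · have hq : qParts (phi m N π) = qParts π := by
          rw [qParts, hqσ, hEfin, Finset.insert_eq_self.2 (Multiset.mem_toFinset.2 h2)]
          exact hQdef.symm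
        rw [g, g, if_pos (cπ.2 h2), if_pos (cσ.2 h1), w_eq, w_eq, hkσ, hq]
      · have hq : qParts (phi m N π) = qParts π + 1 := by
          have hnm : lPart π - m ∉ (π.parts.erase (lPart π)).toFinset := by
            rw [hEfin, Multiset.mem_toFinset]; exact h2
          rw [qParts, hqσ, Finset.card_insert_of_notMem hnm, hEfin, hQdef]
        rw [g, g, if_neg (fun hcon => h2 (cπ.1 hcon)), if_pos (cσ.2 h1), w_eq, w_eq, hkσ, hq]
        exact alg2 t hQpos (by omega)
    · have hcount1 : π.parts.count (lPart π) = 1 := by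
        have hge : lPart π ∈ π.parts := hLmem
        rw [← Multiset.count_pos] at hge
        have h2c : ¬ 2 ≤ π.parts.count (lPart π) := fun hc => h1 ((mem_erase_self_iff hLmem).2 hc)
        omega
      have hEfin : (π.parts.erase (lPart π)).toFinset = π.parts.toFinset.erase (lPart π) :=
        toFinset_erase_of_one hcount1
      have hLfin : lPart π ∈ π.parts.toFinset := Multiset.mem_toFinset.2 hLmem
      by_cases h2 : lPart π - m ∈ π.parts
      · have hmemE : lPart π - m ∈ (π.parts.erase (lPart π)).toFinset := by
          rw [Multiset.mem_toFinset]; exact memE.2 h2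
        have hcardE : (π.parts.erase (lPart π)).toFinset.card = qParts π - 1 := by
          rw [hEfin, Finset.card_erase_of_mem hLfin, hQdef]
        have hq : qParts (phi m N π) = qParts π - 1 := by
          rw [qParts, hqσ, Finset.insert_eq_self.2 hmemE, hcardE]
        have hQ2 : 2 ≤ qParts π := by
          have hpos : 0 < (π.parts.erase (lPart π)).toFinset.card :=
            Finset.card_pos.2 ⟨_, hmemE⟩
          omega
        rw [g, g, if_pos (cπ.2 h2), if_neg (fun hcon => h1 (cσ.1 hcon)), w_eq, w_eq, hkσ, hq]
        exact alg1 t hQ2 hQk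
      · have hq : qParts (phi m N π) = qParts π := by
          have hnm : lPart π - m ∉ (π.parts.erase (lPart π)).toFinset := by
            rw [Multiset.mem_toFinset]; exact fun hc => h2 (memE.1 hc)
          rw [qParts, hqσ, Finset.card_insert_of_notMem hnm, hEfin,
            Finset.card_erase_of_mem hLfin, hQdef]
          omega
        rw [g, g, if_neg (fun hcon => h2 (cπ.1 hcon)), if_neg (fun hcon => h1 (cσ.1 hcon)),
          w_eq, w_eq, hkσ, hq]

lemma lPart_le' {n : ℕ} (π : n.Partition) : lPart π ≤ n :=
  Multiset.sup_le.2 (fun x hx => by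
    have := Multiset.single_le_sum (s := π.parts) (fun y _ => Nat.zero_le y) x hx
    simpa [π.parts_sum] using this)

lemma Lsum_eq_zero (t : ℂ) {n m : ℕ} (h : n < m) : Lsum t n m = 0 :=
  Finset.sum_eq_zero (fun π hπ => by
    have h1 := (Finset.mem_filter.1 hπ).2
    have h2 := lPart_le' π
    omega)

lemma Cg_eq_zero (t : ℂ) {n m : ℕ} (h : n ≤ m) : Cg t n m = 0 :=
  Finset.sum_eq_zero (fun π hπ => by
    have h1 := (Finset.mem_filter.1 hπ).2.2
    have h2 := lPart_le' π
    omega)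

lemma Ssum_eq_zero (t : ℂ) {n m : ℕ} (h : n < m) : Ssum t n m = 0 :=
  Finset.sum_eq_zero (fun π hπ => by
    have h1 := (Finset.mem_filter.1 hπ).2.2
    have h2 := lPart_le' π
    omega)

def singleP (m : ℕ) (hm : m ≠ 0) : m.Partition :=
  ⟨{m}, fun {i} hi => by rw [Multiset.mem_singleton.1 hi]; omega, by simp⟩

lemma Lsum_diag (t : ℂ) {m : ℕ} (hm : m ≠ 0) : Lsum t m m = 1 := by
  have hfil : univ.filter (fun π : m.Partition => lPart π = m) = {singleP m hm} := by
    ext π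
    simp only [Finset.mem_filter, Finset.mem_univ, true_and, Finset.mem_singleton]
    constructor
    · intro hl
      have hmem : m ∈ π.parts := by
        have h0 := lPart_mem π hm
        rwa [hl] at h0
      apply Nat.Partition.ext
      have hc := Multiset.cons_erase hmem
      have hsum := π.parts_sum
      rw [← hc, Multiset.sum_cons] at hsum
      have hzero : (π.parts.erase m).sum = 0 := by omega
      have : π.parts.erase m = 0 := by
        by_contra hne
        obtain ⟨x, hx⟩ := Multiset.exists_mem_of_ne_zero hne
        have hxpos := π.parts_pos (Multiset.mem_of_mem_erase hx)
        have := Multiset.single_le_sum (s := π.parts.erase m)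
          (fun y _ => Nat.zero_le y) x hx
        omega
      rw [← hc, this]
      rfl
    · rintro rfl
      rw [lPart]
      exact Multiset.sup_singleton
  rw [Lsum, hfil, Finset.sum_singleton, w_eq]
  have hk : kParts (singleP m hm) = 1 := rfl
  have hq : qParts (singleP m hm) = 1 := by
    rw [qParts]
    show ({m} : Multiset ℕ).toFinset.card = 1
    simp
  rw [hk, hq]
  norm_num

lemma lemD (t : ℂ) : ∀ (n : ℕ), n ≠ 0 → ∀ (m : ℕ), m ≠ 0 →
    Lsum t n m + Cg t n m = (if m ∣ n then 1 else 0) := by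
  intro n
  induction n using Nat.strong_induction_on with
  | _ n ih =>
    intro hn m hm
    rcases lt_trichotomy n m with h | rfl | h
    · have hnd : ¬ m ∣ n := fun hd => by
        have := Nat.le_of_dvd (Nat.pos_of_ne_zero hn) hd
        omega
      rw [Lsum_eq_zero t h, Cg_eq_zero t (le_of_lt h), if_neg hnd]
      ring
    · rw [Lsum_diag t hm, Cg_eq_zero t le_rfl, if_pos dvd_rfl]
      ring
    · obtain ⟨N, rfl⟩ : ∃ N, n = N + m := ⟨n - m, by omega⟩
      have hN : N ≠ 0 := by omega
      rw [lemA t hN hm, lemB t hN hm, Gg_split t hN hm, Lam_split t hm]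
      have ih' := ih N (by omega) hN m hm
      rw [show (if m ∣ N + m then (1:ℂ) else 0) = (if m ∣ N then 1 else 0) by
        simp [Nat.dvd_add_self_right]]
      linear_combination ih'

lemma lemE (t : ℂ) {n m : ℕ} (hn : n ≠ 0) (hm : m ≠ 0) :
    Ssum t n m = t * Ssum t n (m + 1) + (if m ∣ n then 1 else 0) := by
  have hD := lemD t n hn m hm
  have e1 : Ssum t n m = Lsum t n m
      + ∑ π ∈ univ.filter (fun π : n.Partition =>
          lPart π - sPart π ≤ m - 1 ∧ m + 1 ≤ lPart π), w t π := by
    have f1 : univ.filter (fun π : n.Partition =>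
        (lPart π - sPart π < m ∧ m ≤ lPart π) ∧ lPart π = m)
        = univ.filter (fun π : n.Partition => lPart π = m) :=
      filter_ext _ _ (fun π => by
        have h1 := sPart_pos π hn
        have h2 := sPart_le_lPart π hn
        omega)
    have f2 : univ.filter (fun π : n.Partition =>
        (lPart π - sPart π < m ∧ m ≤ lPart π) ∧ ¬ lPart π = m)
        = univ.filter (fun π : n.Partition =>
          lPart π - sPart π ≤ m - 1 ∧ m + 1 ≤ lPart π) :=
      filter_ext _ _ (fun π => by omega)
    rw [Ssum, sum_split (w t) (fun π : n.Partition => lPart π - sPart π < m ∧ m ≤ lPart π)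
      (fun π : n.Partition => lPart π = m), f1, f2, Lsum]
  have e3 : Ssum t n (m + 1) = ∑ π ∈ univ.filter (fun π : n.Partition =>
      lPart π - sPart π ≤ m ∧ m + 1 ≤ lPart π), w t π := by
    have f3 : univ.filter (fun π : n.Partition =>
        lPart π - sPart π < m + 1 ∧ m + 1 ≤ lPart π)
        = univ.filter (fun π : n.Partition =>
          lPart π - sPart π ≤ m ∧ m + 1 ≤ lPart π) :=
      filter_ext _ _ (fun π => by omega)
    rw [Ssum, f3]
  have e2 : Cg t n m = (∑ π ∈ univ.filter (fun π : n.Partition =>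
        lPart π - sPart π ≤ m - 1 ∧ m + 1 ≤ lPart π), w t π)
      - t * ∑ π ∈ univ.filter (fun π : n.Partition =>
        lPart π - sPart π ≤ m ∧ m + 1 ≤ lPart π), w t π := by
    rw [Cg, sum_split (g t m) _ (fun π : n.Partition => lPart π - sPart π = m),
      sum_split (w t) (fun π : n.Partition => lPart π - sPart π ≤ m ∧ m + 1 ≤ lPart π)
        (fun π : n.Partition => lPart π - sPart π = m)]
    have r1 : ∀ S : Finset n.Partition, (∀ π ∈ S, lPart π - sPart π = m) →
        ∑ π ∈ S, g t m π = -t * ∑ π ∈ S, w t π := fun S hS => by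
      rw [Finset.mul_sum]
      exact Finset.sum_congr rfl (fun π hπ => by rw [g, if_pos (hS π hπ)])
    have r2 : ∀ S : Finset n.Partition, (∀ π ∈ S, lPart π - sPart π ≠ m) →
        ∑ π ∈ S, g t m π = (1 - t) * ∑ π ∈ S, w t π := fun S hS => by
      rw [Finset.mul_sum]
      exact Finset.sum_congr rfl (fun π hπ => by rw [g, if_neg (hS π hπ)])
    rw [r1 _ (fun π hπ => by
        have := (Finset.mem_filter.1 hπ).2; exact this.2),
      r2 _ (fun π hπ => by
        have := (Finset.mem_filter.1 hπ).2; exact this.2)]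
    have efil : univ.filter (fun π : n.Partition =>
        (lPart π - sPart π ≤ m ∧ m + 1 ≤ lPart π) ∧ ¬ lPart π - sPart π = m)
        = univ.filter (fun π : n.Partition =>
        lPart π - sPart π ≤ m - 1 ∧ m + 1 ≤ lPart π) :=
      filter_ext _ _ (fun π => by omega)
    rw [efil]
    ring
  rw [e1, e3]
  linear_combination hD - e2

lemma lemF_aux (t : ℂ) : ∀ (j m n : ℕ), m ≠ 0 → n ≠ 0 → n < m + j →
    Ssum t n m = ∑ d ∈ n.divisors.filter (fun d => m ≤ d), t ^ (d - m) := by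
  intro j
  induction j with
  | zero =>
    intro m n hm hn h
    rw [Ssum_eq_zero t (by omega), Finset.filter_false_of_mem, Finset.sum_empty]
    intro d hd
    have hdn : d ∣ n := (Nat.mem_divisors.1 hd).1
    have := Nat.le_of_dvd (Nat.pos_of_ne_zero hn) hdn
    omega
  | succ j ihj =>
    intro m n hm hn h
    rcases lt_or_ge n (m + j) with h' | h'
    · exact ihj m n hm hn h'
    · rw [lemE t hn hm, ihj (m + 1) n (by omega) hn (by omega)]
      rw [eq_comm, ← Finset.sum_filter_add_sum_filter_not
        (n.divisors.filter (fun d => m ≤ d)) (fun d => d = m) (fun d => t ^ (d - m)),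
        Finset.filter_filter, Finset.filter_filter]
      have f1 : n.divisors.filter (fun d => m ≤ d ∧ d = m)
          = n.divisors.filter (fun d => d = m) :=
        Finset.filter_congr (fun d _ => by omega)
      have f2 : n.divisors.filter (fun d => m ≤ d ∧ ¬ d = m)
          = n.divisors.filter (fun d => m + 1 ≤ d) :=
        Finset.filter_congr (fun d _ => by omega)
      rw [f1, f2]
      have s1 : ∑ d ∈ n.divisors.filter (fun d => d = m), t ^ (d - m)
          = (if m ∣ n then 1 else 0) := by
        rw [Finset.filter_eq']
        by_cases hdvd : m ∣ n
        · rw [if_pos (Nat.mem_divisors.2 ⟨hdvd, hn⟩), Finset.sum_singleton, Nat.sub_self,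
            pow_zero, if_pos hdvd]
        · rw [if_neg (fun hmem => hdvd (Nat.mem_divisors.1 hmem).1), Finset.sum_empty,
            if_neg hdvd]
      have s2 : ∑ d ∈ n.divisors.filter (fun d => m + 1 ≤ d), t ^ (d - m)
          = t * ∑ d ∈ n.divisors.filter (fun d => m + 1 ≤ d), t ^ (d - (m + 1)) := by
        rw [Finset.mul_sum]
        apply Finset.sum_congr rfl
        intro d hd
        have hdm : m + 1 ≤ d := (Finset.mem_filter.1 hd).2
        rw [show d - m = (d - (m + 1)) + 1 by omega, pow_succ]
        ring
      rw [s1, s2]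
      ring

end T4

open T4

/-- Theorem 4: weighted partition identity for the inverse Möbius-type transform. -/
theorem theorem4 (a : ℕ → ℂ) (t : ℂ) (ht0 : t ≠ 0) (ht1 : t ≠ 1) (n : ℕ) (hn : 1 ≤ n) :
    ∑ π : n.Partition, t ^ (kParts π - 1) * ((t - 1) / t) ^ (qParts π - 1) *
        ∑ j ∈ Finset.Icc 1 (sPart π), a (lPart π - sPart π + j) =
    ∑ d ∈ n.divisors, t ^ d * ∑ i ∈ Finset.Icc 1 d, a i / t ^ i := by
  have hn0 : n ≠ 0 := by omega
  have hL : ∀ π : n.Partition, t ^ (kParts π - 1) * ((t - 1) / t) ^ (qParts π - 1) *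
        ∑ j ∈ Finset.Icc 1 (sPart π), a (lPart π - sPart π + j)
      = ∑ i ∈ Finset.Icc 1 n,
          (if lPart π - sPart π < i ∧ i ≤ lPart π then w t π * a i else 0) := by
    intro π
    have hQ1 : 1 ≤ qParts π := qParts_pos π hn0
    have hQk : qParts π ≤ kParts π := qParts_le_kParts π
    have hw : t ^ (kParts π - 1) * ((t - 1) / t) ^ (qParts π - 1) = w t π := by
      rw [w_eq, div_pow,
        show kParts π - 1 = (kParts π - qParts π) + (qParts π - 1) by omega, pow_add]
      field_simp
    have hs1 : 1 ≤ sPart π := sPart_pos π hn0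
    have hsl : sPart π ≤ lPart π := sPart_le_lPart π hn0
    have hln : lPart π ≤ n := lPart_le' π
    have hinner : ∑ j ∈ Finset.Icc 1 (sPart π), a (lPart π - sPart π + j)
        = ∑ i ∈ Finset.Icc (lPart π - sPart π + 1) (lPart π), a i := by
      refine Finset.sum_bij' (fun j _ => lPart π - sPart π + j)
        (fun i _ => i - (lPart π - sPart π)) ?_ ?_ ?_ ?_ ?_
      · intro j hj
        show lPart π - sPart π + j ∈ Finset.Icc (lPart π - sPart π + 1) (lPart π)
        simp only [Finset.mem_Icc] at *
        omega
      · intro i hi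
        show i - (lPart π - sPart π) ∈ Finset.Icc 1 (sPart π)
        simp only [Finset.mem_Icc] at *
        omega
      · intro j hj
        simp only [Finset.mem_Icc] at hj
        show lPart π - sPart π + j - (lPart π - sPart π) = j
        omega
      · intro i hi
        simp only [Finset.mem_Icc] at hi
        show lPart π - sPart π + (i - (lPart π - sPart π)) = i
        omega
      · intro j hj; rfl
    have hfil : Finset.Icc (lPart π - sPart π + 1) (lPart π)
        = (Finset.Icc 1 n).filter (fun i => lPart π - sPart π < i ∧ i ≤ lPart π) := by
      ext i
      simp only [Finset.mem_Icc, Finset.mem_filter]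
      omega
    rw [hw, hinner, hfil, Finset.mul_sum, ← Finset.sum_filter]
  rw [Finset.sum_congr rfl (fun π _ => hL π), Finset.sum_comm]
  have hLHS : ∀ i ∈ Finset.Icc 1 n,
      (∑ π : n.Partition, if lPart π - sPart π < i ∧ i ≤ lPart π then w t π * a i else 0)
      = (∑ d ∈ n.divisors.filter (fun d => i ≤ d), t ^ (d - i)) * a i := by
    intro i hi
    have hi1 : 1 ≤ i := (Finset.mem_Icc.1 hi).1
    rw [← Finset.sum_filter, ← Finset.sum_mul, ← Ssum,
      lemF_aux t n i n (by omega) hn0 (by omega)]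
  rw [Finset.sum_congr rfl hLHS]
  -- now transform RHS
  have hRHS : ∀ d ∈ n.divisors, t ^ d * ∑ i ∈ Finset.Icc 1 d, a i / t ^ i
      = ∑ i ∈ Finset.Icc 1 n, (if i ≤ d then t ^ (d - i) * a i else 0) := by
    intro d hd
    obtain ⟨hdvd, -⟩ := Nat.mem_divisors.1 hd
    have hdn : d ≤ n := Nat.le_of_dvd (Nat.pos_of_ne_zero hn0) hdvd
    have hIcc : Finset.Icc 1 d = (Finset.Icc 1 n).filter (fun i => i ≤ d) := by
      ext i
      simp only [Finset.mem_Icc, Finset.mem_filter]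
      omega
    rw [Finset.mul_sum, hIcc, ← Finset.sum_filter]
    apply Finset.sum_congr rfl
    intro i hi
    have hid : i ≤ d := (Finset.mem_filter.1 hi).2
    rw [show d = (d - i) + i by omega, pow_add]
    have hti : (t : ℂ) ^ i ≠ 0 := pow_ne_zero _ ht0
    field_simp
    rw [Nat.add_sub_cancel]
    ring
  rw [Finset.sum_congr rfl hRHS, Finset.sum_comm]
  apply Finset.sum_congr rfl
  intro i hi
  rw [← Finset.sum_filter, Finset.sum_mul]
end

section
/- Let t, u ∈ ℂ, let m ≥ 1 be an integer, and let N ≥ 1 be an integer. Then the coefficient of q^N in the formal power series (over ℂ) t·u · q^m · (∏_{i=0}^{N} (1 − t·q^{m+i}))⁻¹ · ∏_{i=1}^{N} (1 − (1−u)·t·q^{m+i}) equals ∑_{π ∈ P(N), s(π) = m} t^{k(π)} u^{Q(π)}, the sum being over all partitions of N whose smallest part equals m. (This is the coefficient-of-q^N form of the generating-function identity, established in the proof of Theorem 1, (tuq^m/(1−tq^m)) · ∏_{i>m} (1−(1−u)tq^i)/(1−tq^i) for partitions with prescribed smallest part, with the infinite product truncated at exponent ≤ m+N, which does not affect the coefficient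 of q^N.) -/
open Finset PowerSeries

namespace SPGF

noncomputable def hS (t : ℂ) (j : ℕ) : PowerSeries ℂ :=
  PowerSeries.mk fun n => if j ∣ n then t ^ (n / j) else 0

noncomputable def FS (t u : ℂ) (j : ℕ) : PowerSeries ℂ :=
  PowerSeries.mk fun n => if j ∣ n ∧ n ≠ 0 then u * t ^ (n / j) else 0

noncomputable def FS0 (t u : ℂ) (j : ℕ) : PowerSeries ℂ :=
  PowerSeries.mk fun n => if n = 0 then 1 else if j ∣ n then u * t ^ (n / j) else 0

lemma one_sub_mul_hS (t : ℂ) {j : ℕ} (hj : 1 ≤ j) :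
    (1 - PowerSeries.C t * X ^ j) * hS t j = 1 := by
  ext n
  rw [sub_mul, one_mul, map_sub, PowerSeries.coeff_one, mul_comm (PowerSeries.C t) (X ^ j),
    mul_assoc, PowerSeries.coeff_X_pow_mul']
  simp only [hS, PowerSeries.coeff_C_mul, coeff_mk]
  rcases eq_or_ne n 0 with rfl | hn
  · rw [if_pos (dvd_zero j), if_neg (by omega : ¬ j ≤ 0), Nat.zero_div, pow_zero, sub_zero,
      if_pos rfl]
  · rw [if_neg hn]
    by_cases hd : j ∣ n
    · obtain ⟨c, rfl⟩ := hd
      have hc : 1 ≤ c := by by_contra h; push_neg at h; interval_cases c <;> simp_all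
      have hle : j ≤ j * c := Nat.le_mul_of_pos_right j (by omega)
      have hsub : j * c - j = j * (c - 1) := by
        have := Nat.mul_sub j c 1
        omega
      rw [if_pos hle, hsub, if_pos (Dvd.intro _ rfl), if_pos (Dvd.intro _ rfl),
        Nat.mul_div_cancel_left _ (by omega), Nat.mul_div_cancel_left _ (by omega)]
      have : t * t ^ (c - 1) = t ^ c := by
        rw [← pow_succ']
        congr 1
        omega
      rw [this, sub_self]
    · rw [if_neg hd, zero_sub, neg_eq_zero]
      split_ifs with hle h2
      · exact absurd (by rw [← Nat.sub_add_cancel hle]; exact h2.add (dvd_refl j)) hd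
      · exact mul_zero t
      · rfl

lemma CX_mul_hS (t u : ℂ) {m : ℕ} (hm : 1 ≤ m) :
    PowerSeries.C (t * u) * X ^ m * hS t m = FS t u m := by
  ext n
  rw [mul_comm (PowerSeries.C (t * u)) (X ^ m), mul_assoc, PowerSeries.coeff_X_pow_mul']
  simp only [hS, FS, PowerSeries.coeff_C_mul, coeff_mk]
  by_cases hle : m ≤ n
  · rw [if_pos hle]
    by_cases hd : m ∣ n - m
    · have hdn : m ∣ n := by
        rw [← Nat.sub_add_cancel hle]; exact hd.add (dvd_refl m)
      obtain ⟨c, rfl⟩ := hdn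
      have hc : 1 ≤ c := by nlinarith [Nat.le_of_dvd (by omega) (dvd_refl 1)]
      have hsub : m * c - m = m * (c - 1) := by have := Nat.mul_sub m c 1; omega
      rw [if_pos hd, if_pos ⟨(Dvd.intro _ rfl), by positivity⟩, hsub,
        Nat.mul_div_cancel_left _ (by omega), Nat.mul_div_cancel_left _ (by omega)]
      have : t ^ c = t * t ^ (c - 1) := by rw [← pow_succ']; congr 1; omega
      rw [this]; ring
    · rw [if_neg hd, mul_zero, if_neg]
      rintro ⟨⟨c, rfl⟩, hne⟩
      exact hd ⟨c - 1, by have := Nat.mul_sub m c 1; omega⟩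
  · rw [if_neg hle, if_neg]
    rintro ⟨hd, hne⟩
    exact hle (Nat.le_of_dvd (by omega) hd)

lemma one_sub_mul_hS_eq_FS0 (t u : ℂ) {j : ℕ} (hj : 1 ≤ j) :
    (1 - PowerSeries.C ((1 - u) * t) * X ^ j) * hS t j = FS0 t u j := by
  ext n
  rw [sub_mul, one_mul, map_sub, mul_comm (PowerSeries.C ((1 - u) * t)) (X ^ j),
    mul_assoc, PowerSeries.coeff_X_pow_mul']
  simp only [hS, FS0, PowerSeries.coeff_C_mul, coeff_mk]
  rcases eq_or_ne n 0 with rfl | hn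
  · rw [if_pos (dvd_zero j), if_neg (by omega : ¬ j ≤ 0), Nat.zero_div, pow_zero, sub_zero,
      if_pos rfl]
  · rw [if_neg hn]
    by_cases hd : j ∣ n
    · obtain ⟨c, rfl⟩ := hd
      have hc : 1 ≤ c := by by_contra h; push_neg at h; interval_cases c <;> simp_all
      have hle : j ≤ j * c := Nat.le_mul_of_pos_right j (by omega)
      have hsub : j * c - j = j * (c - 1) := by have := Nat.mul_sub j c 1; omega
      rw [if_pos hle, hsub, if_pos (Dvd.intro _ rfl), if_pos (Dvd.intro _ rfl),
        Nat.mul_div_cancel_left _ (by omega), Nat.mul_div_cancel_left _ (by omega)]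
      have : t ^ c = t * t ^ (c - 1) := by rw [← pow_succ']; congr 1; omega
      rw [this, if_pos (show j ∣ j * c from ⟨c, rfl⟩)]; ring
    · rw [if_neg hd, if_neg hd, zero_sub, neg_eq_zero]
      split_ifs with hle h2
      · exact absurd (by rw [← Nat.sub_add_cancel hle]; exact h2.add (dvd_refl j)) hd
      · exact mul_zero _
      · rfl

lemma series_eq (t u : ℂ) {m N : ℕ} (hm : 1 ≤ m) :
    PowerSeries.C (t * u) * (X : PowerSeries ℂ) ^ m *
        (∏ i ∈ Finset.range (N + 1), (1 - PowerSeries.C t * (X : PowerSeries ℂ) ^ (m + i)))⁻¹ *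
        ∏ i ∈ Finset.Icc 1 N, (1 - PowerSeries.C ((1 - u) * t) * (X : PowerSeries ℂ) ^ (m + i))
      = ∏ i ∈ Finset.range (N + 1), (if i = 0 then FS t u m else FS0 t u (m + i)) := by
  have h0 : (0 : ℕ) ∉ Finset.Icc 1 N := by simp
  have hins : Finset.range (N + 1) = insert 0 (Finset.Icc 1 N) := by
    ext x; simp [Finset.mem_range, Finset.mem_Icc]; omega
  have hconst : constantCoeff
      (∏ i ∈ Finset.range (N + 1), (1 - PowerSeries.C t * (X : PowerSeries ℂ) ^ (m + i))) ≠ 0 := by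
    rw [map_prod]
    have : ∀ i ∈ Finset.range (N + 1),
        constantCoeff (1 - PowerSeries.C t * (X : PowerSeries ℂ) ^ (m + i)) = 1 := by
      intro i _
      simp [zero_pow (by omega : m + i ≠ 0)]
    rw [Finset.prod_congr rfl this, Finset.prod_const_one]
    exact one_ne_zero
  have hinv : (∏ i ∈ Finset.range (N + 1),
      (1 - PowerSeries.C t * (X : PowerSeries ℂ) ^ (m + i)))⁻¹
      = ∏ i ∈ Finset.range (N + 1), hS t (m + i) := by
    symm
    rw [PowerSeries.eq_inv_iff_mul_eq_one hconst, ← Finset.prod_mul_distrib]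
    refine Finset.prod_eq_one fun i _ => ?_
    rw [mul_comm]
    exact one_sub_mul_hS t (by omega)
  rw [hinv, hins, Finset.prod_insert h0, Finset.prod_insert h0]
  rw [if_pos rfl]
  have hcongr : ∏ i ∈ Finset.Icc 1 N, (if i = 0 then FS t u m else FS0 t u (m + i))
      = ∏ i ∈ Finset.Icc 1 N, FS0 t u (m + i) := by
    refine Finset.prod_congr rfl fun i hi => ?_
    rw [if_neg (by simp [Finset.mem_Icc] at hi; omega)]
  rw [hcongr, ← CX_mul_hS t u hm, add_zero]
  rw [show ∀ a b c d : PowerSeries ℂ, a * (b * c) * d = (a * b) * (d * c) from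
    fun a b c d => by ring, ← Finset.prod_mul_distrib]
  rw [Finset.prod_congr rfl fun i hi => one_sub_mul_hS_eq_FS0 t u (j := m + i) (by omega)]

/-! ### Combinatorial part -/

lemma part_le {N : ℕ} (π : N.Partition) {p : ℕ} (hp : p ∈ π.parts) : p ≤ N := by
  have := Multiset.single_le_sum (fun x _ => Nat.zero_le x) _ hp
  rwa [π.parts_sum] at this

lemma sPart_iff {N m : ℕ} (hm : 1 ≤ m) (π : N.Partition) :
    sPart π = m ↔ m ∈ π.parts ∧ ∀ p ∈ π.parts, m ≤ p := by
  constructor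
  · intro h
    unfold sPart at h
    cases hmin : π.parts.toFinset.min with
    | top => rw [hmin] at h; simp at h; omega
    | coe a =>
      rw [hmin] at h
      simp only [WithTop.untopD_coe] at h
      subst h
      refine ⟨Multiset.mem_toFinset.mp (Finset.mem_of_min hmin), fun p hp => ?_⟩
      have := Finset.min_le (Multiset.mem_toFinset.mpr hp)
      rw [hmin] at this
      exact_mod_cast this
  · rintro ⟨hmem, hle⟩
    have : π.parts.toFinset.min = (m : WithTop ℕ) := by
      refine le_antisymm (Finset.min_le (Multiset.mem_toFinset.mpr hmem)) ?_
      exact Finset.le_min fun b hb => WithTop.coe_le_coe.mpr (hle b (Multiset.mem_toFinset.mp hb))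
    unfold sPart
    rw [this]
    rfl

lemma toFinset_subset_image {N m : ℕ} (π : N.Partition) (hle : ∀ p ∈ π.parts, m ≤ p) :
    π.parts.toFinset ⊆ (Finset.range (N + 1)).image (fun i => m + i) := by
  intro p hp
  rw [Multiset.mem_toFinset] at hp
  refine Finset.mem_image.mpr ⟨p - m, Finset.mem_range.mpr ?_, ?_⟩
  · have := part_le π hp
    omega
  · have := hle p hp
    omega

lemma prod_shift {M : Type*} [CommMonoid M] {N m : ℕ} (π : N.Partition)
    (hle : ∀ p ∈ π.parts, m ≤ p) (g : ℕ → ℕ → M) (hg : ∀ p, g p 0 = 1) :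
    ∏ i ∈ Finset.range (N + 1), g (m + i) (π.parts.count (m + i))
      = ∏ p ∈ π.parts.toFinset, g p (π.parts.count p) := by
  rw [← Finset.prod_image (g := fun i => m + i)
    (f := fun p => g p (π.parts.count p)) (fun x _ y _ h => by dsimp at h; omega)]
  symm
  refine Finset.prod_subset (toFinset_subset_image π hle) fun p _ hp => ?_
  rw [Multiset.count_eq_zero_of_notMem (fun h => hp (Multiset.mem_toFinset.mpr h)), hg]

lemma sum_shift {M : Type*} [AddCommMonoid M] {N m : ℕ} (π : N.Partition)
    (hle : ∀ p ∈ π.parts, m ≤ p) (g : ℕ → ℕ → M) (hg : ∀ p, g p 0 = 0) :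
    ∑ i ∈ Finset.range (N + 1), g (m + i) (π.parts.count (m + i))
      = ∑ p ∈ π.parts.toFinset, g p (π.parts.count p) := by
  rw [← Finset.sum_image (g := fun i => m + i)
    (f := fun p => g p (π.parts.count p)) (fun x _ y _ h => by dsimp at h; omega)]
  symm
  refine Finset.sum_subset (toFinset_subset_image π hle) fun p _ hp => ?_
  rw [Multiset.count_eq_zero_of_notMem (fun h => hp (Multiset.mem_toFinset.mpr h)), hg]

noncomputable def lOf (m N : ℕ) (π : N.Partition) : ℕ →₀ ℕ :=
  Finsupp.onFinset (Finset.range (N + 1)) (fun i => (m + i) * π.parts.count (m + i))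
    (fun i h => by
      rw [Finset.mem_range]
      have hmem : m + i ∈ π.parts := by
        by_contra hc
        rw [Multiset.count_eq_zero_of_notMem hc, mul_zero] at h
        exact h rfl
      have := part_le π hmem
      omega)

@[simp] lemma lOf_apply (m N : ℕ) (π : N.Partition) (i : ℕ) :
    lOf m N π i = (m + i) * π.parts.count (m + i) := rfl

def pOf (m N : ℕ) (l : ℕ →₀ ℕ) : Multiset ℕ :=
  ∑ i ∈ Finset.range (N + 1), Multiset.replicate (l i / (m + i)) (m + i)

lemma mem_pOf {m N a : ℕ} {l : ℕ →₀ ℕ} :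
    a ∈ pOf m N l ↔ ∃ i, i ∈ Finset.range (N + 1) ∧ l i / (m + i) ≠ 0 ∧ a = m + i := by
  simp only [pOf, Multiset.mem_sum, Multiset.mem_replicate]

lemma count_pOf {m N : ℕ} (l : ℕ →₀ ℕ) (i : ℕ) :
    (pOf m N l).count (m + i) = if i ≤ N then l i / (m + i) else 0 := by
  rw [pOf, Multiset.count_sum']
  simp only [Multiset.count_replicate]
  by_cases hi : i ≤ N
  · rw [if_pos hi, Finset.sum_eq_single i]
    · rw [if_pos rfl]
    · intro b _ hb
      rw [if_neg (by omega)]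
    · intro h
      exact absurd (Finset.mem_range.mpr (by omega)) h
  · rw [if_neg hi]
    refine Finset.sum_eq_zero fun b hb => ?_
    rw [Finset.mem_range] at hb
    rw [if_neg (by omega)]

def POf (m N : ℕ) (hm : 1 ≤ m) (l : ℕ →₀ ℕ)
    (hsum : ∑ i ∈ Finset.range (N + 1), l i = N)
    (hdvd : ∀ i ∈ Finset.range (N + 1), (m + i) ∣ l i) : N.Partition where
  parts := pOf m N l
  parts_pos := by
    intro p hp
    rw [mem_pOf] at hp
    obtain ⟨i, _, _, rfl⟩ := hp
    omega
  parts_sum := by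
    have h1 : (pOf m N l).sum
        = ∑ i ∈ Finset.range (N + 1), (Multiset.replicate (l i / (m + i)) (m + i)).sum := by
      rw [pOf, ← Multiset.coe_sumAddMonoidHom, map_sum]
    rw [h1]
    have h2 : ∑ i ∈ Finset.range (N + 1), (Multiset.replicate (l i / (m + i)) (m + i)).sum
        = ∑ i ∈ Finset.range (N + 1), l i := by
      refine Finset.sum_congr rfl fun i hi => ?_
      rw [Multiset.sum_replicate, smul_eq_mul, Nat.div_mul_cancel (hdvd i hi)]
    rw [h2, hsum]

lemma lOf_mem {m N : ℕ} (hm : 1 ≤ m) (π : N.Partition)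
    (hmem : m ∈ π.parts) (hle : ∀ p ∈ π.parts, m ≤ p) :
    lOf m N π ∈ Finset.filter
      (fun l : ℕ →₀ ℕ => l 0 ≠ 0 ∧ ∀ i ∈ Finset.range (N + 1), (m + i) ∣ l i)
      (finsuppAntidiag (Finset.range (N + 1)) N) := by
  rw [Finset.mem_filter, Finset.mem_finsuppAntidiag]
  refine ⟨⟨?_, Finsupp.support_onFinset_subset⟩, ?_, fun i _ => dvd_mul_right _ _⟩
  · have h1 : (Finset.range (N + 1)).sum ⇑(lOf m N π)
        = ∑ i ∈ Finset.range (N + 1), (m + i) * π.parts.count (m + i) := rfl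
    rw [h1, sum_shift (M := ℕ) π hle (fun p c => p * c) (fun p => mul_zero p)]
    have h2 := Finset.sum_multiset_map_count π.parts (id : ℕ → ℕ)
    rw [Multiset.map_id] at h2
    have h3 : ∑ p ∈ π.parts.toFinset, p * π.parts.count p
        = ∑ p ∈ π.parts.toFinset, π.parts.count p • id p :=
      Finset.sum_congr rfl fun p _ => by rw [smul_eq_mul, id, mul_comm]
    rw [h3, ← h2, π.parts_sum]
  · have hc0 : π.parts.count (m + 0) ≠ 0 := Multiset.count_ne_zero.mpr (by rwa [add_zero])
    exact Nat.mul_ne_zero (by omega) hc0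

lemma pOf_lOf {m N : ℕ} (hm : 1 ≤ m) (π : N.Partition) (hle : ∀ p ∈ π.parts, m ≤ p) :
    pOf m N (lOf m N π) = π.parts := by
  rw [Multiset.ext]
  intro a
  by_cases hrange : m ≤ a ∧ a ≤ m + N
  · obtain ⟨i, rfl⟩ : ∃ i, a = m + i := ⟨a - m, by omega⟩
    rw [count_pOf, if_pos (by omega), lOf_apply, Nat.mul_div_cancel_left _ (by omega)]
  · rw [Multiset.count_eq_zero_of_notMem, Multiset.count_eq_zero_of_notMem]
    · intro h
      have := hle a h
      have := part_le π h
      omega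
    · intro h
      rw [mem_pOf] at h
      obtain ⟨i, hi, _, rfl⟩ := h
      rw [Finset.mem_range] at hi
      omega

lemma lOf_pOf {m N : ℕ} (hm : 1 ≤ m) (l : ℕ →₀ ℕ) (hsupp : l.support ⊆ Finset.range (N + 1))
    (hdvd : ∀ i ∈ Finset.range (N + 1), (m + i) ∣ l i) (π : N.Partition)
    (hparts : π.parts = pOf m N l) :
    lOf m N π = l := by
  ext i
  rw [lOf_apply, hparts, count_pOf]
  by_cases hi : i ≤ N
  · rw [if_pos hi, Nat.mul_div_cancel' (hdvd i (Finset.mem_range.mpr (by omega)))]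
  · rw [if_neg hi, mul_zero]
    symm
    rw [← Finsupp.notMem_support_iff]
    exact fun h => hi (by have := hsupp h; rw [Finset.mem_range] at this; omega)

lemma value_eq {m N : ℕ} (hm : 1 ≤ m) (t u : ℂ) (π : N.Partition)
    (hmem : m ∈ π.parts) (hle : ∀ p ∈ π.parts, m ≤ p) :
    t ^ kParts π * u ^ qParts π
      = ∏ i ∈ Finset.range (N + 1),
        PowerSeries.coeff (lOf m N π i) (if i = 0 then FS t u m else FS0 t u (m + i)) := by
  have hstep : ∀ i ∈ Finset.range (N + 1),
      PowerSeries.coeff (lOf m N π i) (if i = 0 then FS t u m else FS0 t u (m + i))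
      = (fun p c => if c = 0 then (1 : ℂ) else u * t ^ c) (m + i) (π.parts.count (m + i)) := by
    intro i _
    dsimp only
    rcases eq_or_ne i 0 with rfl | hi0
    · rw [if_pos rfl, lOf_apply, add_zero]
      have hc0 : π.parts.count m ≠ 0 := Multiset.count_ne_zero.mpr hmem
      simp only [FS, PowerSeries.coeff_mk]
      rw [if_pos ⟨dvd_mul_right _ _, Nat.mul_ne_zero (by omega) hc0⟩,
        Nat.mul_div_cancel_left _ (by omega), if_neg hc0]
    · rw [if_neg hi0, lOf_apply]
      simp only [FS0, PowerSeries.coeff_mk]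
      rcases eq_or_ne (π.parts.count (m + i)) 0 with hc | hc
      · rw [hc, mul_zero, if_pos rfl, if_pos rfl]
      · rw [if_neg (Nat.mul_ne_zero (by omega) hc), if_pos (dvd_mul_right _ _),
          Nat.mul_div_cancel_left _ (by omega), if_neg hc]
  rw [Finset.prod_congr rfl hstep,
    prod_shift π hle (fun p c => if c = 0 then (1 : ℂ) else u * t ^ c) (fun p => if_pos rfl)]
  have h2 : ∀ p ∈ π.parts.toFinset,
      (if π.parts.count p = 0 then (1 : ℂ) else u * t ^ π.parts.count p)
      = u * t ^ π.parts.count p := fun p hp =>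
    if_neg (Multiset.count_ne_zero.mpr (Multiset.mem_toFinset.mp hp))
  rw [Finset.prod_congr rfl h2, Finset.prod_mul_distrib, Finset.prod_const,
    Finset.prod_pow_eq_pow_sum, Multiset.toFinset_sum_count_eq]
  rw [kParts, qParts]
  ring

end SPGF

/-- Generating function (coefficient-of-`q^N` form) for partitions with prescribed
smallest part `m` (from the proof of Theorem 1). -/
theorem smallestPart_genFun (t u : ℂ) (m : ℕ) (hm : 1 ≤ m) (N : ℕ) (hN : 1 ≤ N) :
    PowerSeries.coeff N
      (PowerSeries.C (t * u) * (PowerSeries.X : PowerSeries ℂ) ^ m *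
        (∏ i ∈ Finset.range (N + 1),
          (1 - PowerSeries.C t * (PowerSeries.X : PowerSeries ℂ) ^ (m + i)))⁻¹ *
        ∏ i ∈ Finset.Icc 1 N,
          (1 - PowerSeries.C ((1 - u) * t) * (PowerSeries.X : PowerSeries ℂ) ^ (m + i))) =
    ∑ π ∈ Finset.univ.filter (fun π : N.Partition => sPart π = m),
      t ^ kParts π * u ^ qParts π := by
  classical
  rw [SPGF.series_eq t u hm, PowerSeries.coeff_prod]
  have hstepA : ∑ l ∈ Finset.filter
        (fun l : ℕ →₀ ℕ => l 0 ≠ 0 ∧ ∀ i ∈ Finset.range (N + 1), (m + i) ∣ l i)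
        (finsuppAntidiag (Finset.range (N + 1)) N),
      (∏ i ∈ Finset.range (N + 1), PowerSeries.coeff (l i)
        (if i = 0 then SPGF.FS t u m else SPGF.FS0 t u (m + i)))
      = ∑ l ∈ finsuppAntidiag (Finset.range (N + 1)) N,
      (∏ i ∈ Finset.range (N + 1), PowerSeries.coeff (l i)
        (if i = 0 then SPGF.FS t u m else SPGF.FS0 t u (m + i))) := by
    refine Finset.sum_filter_of_ne fun l hl hne => ?_
    have hfac := Finset.prod_ne_zero_iff.mp hne
    have hcond0 : m ∣ l 0 ∧ l 0 ≠ 0 := by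
      have h0 := hfac 0 (Finset.mem_range.mpr (Nat.succ_pos N))
      rw [if_pos rfl] at h0
      simp only [SPGF.FS, PowerSeries.coeff_mk] at h0
      by_contra hc
      rw [if_neg hc] at h0
      exact h0 rfl
    refine ⟨hcond0.2, fun i hi => ?_⟩
    rcases eq_or_ne i 0 with rfl | hi0
    · rw [add_zero]
      exact hcond0.1
    · have hi' := hfac i hi
      rw [if_neg hi0] at hi'
      simp only [SPGF.FS0, PowerSeries.coeff_mk] at hi'
      rcases eq_or_ne (l i) 0 with h | h
      · rw [h]
        exact dvd_zero _
      · by_contra hd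
        rw [if_neg h, if_neg hd] at hi'
        exact hi' rfl
  rw [← hstepA]
  refine (Finset.sum_bij'
    (fun (π : N.Partition) (_ : π ∈ Finset.univ.filter fun π : N.Partition => sPart π = m) =>
      SPGF.lOf m N π)
    (fun l hl => SPGF.POf m N hm l
      ((Finset.mem_finsuppAntidiag.mp (Finset.mem_filter.mp hl).1).1)
      ((Finset.mem_filter.mp hl).2.2))
    ?_ ?_ ?_ ?_ ?_).symm
  · intro π hπ
    obtain ⟨hmem, hle⟩ := (SPGF.sPart_iff hm π).mp (Finset.mem_filter.mp hπ).2
    exact SPGF.lOf_mem hm π hmem hle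
  · intro l hl
    rw [Finset.mem_filter]
    refine ⟨Finset.mem_univ _, (SPGF.sPart_iff hm _).mpr ⟨?_, ?_⟩⟩
    · show m ∈ SPGF.pOf m N l
      rw [SPGF.mem_pOf]
      have hd : m + 0 ∣ l 0 := (Finset.mem_filter.mp hl).2.2 0 (Finset.mem_range.mpr (Nat.succ_pos N))
      have hne : l 0 ≠ 0 := (Finset.mem_filter.mp hl).2.1
      obtain ⟨c, hc⟩ := hd
      refine ⟨0, Finset.mem_range.mpr (Nat.succ_pos N), ?_, by omega⟩
      rw [hc, Nat.mul_div_cancel_left _ (by omega)]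
      intro h
      rw [h, mul_zero] at hc
      exact hne hc
    · intro p hp
      rw [show (SPGF.POf m N hm l _ _).parts = SPGF.pOf m N l from rfl, SPGF.mem_pOf] at hp
      obtain ⟨i, _, _, rfl⟩ := hp
      omega
  · intro π hπ
    obtain ⟨hmem, hle⟩ := (SPGF.sPart_iff hm π).mp (Finset.mem_filter.mp hπ).2
    exact Nat.Partition.ext (SPGF.pOf_lOf hm π hle)
  · intro l hl
    exact SPGF.lOf_pOf hm l
      ((Finset.mem_finsuppAntidiag.mp (Finset.mem_filter.mp hl).1).2)
      ((Finset.mem_filter.mp hl).2.2) _ rfl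
  · intro π hπ
    obtain ⟨hmem, hle⟩ := (SPGF.sPart_iff hm π).mp (Finset.mem_filter.mp hπ).2
    exact SPGF.value_eq hm t u π hmem hle
end
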